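/- Let Y be a linear subspace of a topological vector space X and let A ⊆ X be an open convex set intersecting Y. Then A ∩ Y is relatively closed in A if and only if Y is closed in X. -/

import Mathlib

theorem stmt_2 {X : Type*} [AddCommGroup X] [Module ℝ X] [TopologicalSpace X]
    [IsTopologicalAddGroup X] [ContinuousSMul ℝ X]
    (Y : Submodule ℝ X) (A : Set X) (hAopen : IsOpen A) (hAconv : Convex ℝ A)
    (hne : (A ∩ (Y : Set X)).Nonempty) :
    (A ∩ (Y : Set X) = closure (A ∩ (Y : Set X)) ∩ A) ↔ IsClosed (Y : Set X) := by
  constructor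
  · intro h
    obtain ⟨a, haA, haY⟩ := hne
    refine isClosed_of_closure_subset fun y hy => ?_
    have hYcl : ∀ x ∈ closure (Y : Set X), x ∈ Y.topologicalClosure := by
      intro x hx
      rwa [← Submodule.topologicalClosure_coe] at hx
    -- find small t > 0 with a + t • (y - a) ∈ A
    have hcont : Continuous fun t : ℝ => a + t • (y - a) := by continuity
    have hS : IsOpen ((fun t : ℝ => a + t • (y - a)) ⁻¹' A) := hAopen.preimage hcont
    have h0 : (0 : ℝ) ∈ (fun t : ℝ => a + t • (y - a)) ⁻¹' A := by
      simp [haA]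
    obtain ⟨ε, hε, hball⟩ := Metric.isOpen_iff.1 hS 0 h0
    set t : ℝ := ε / 2 with ht
    have htpos : 0 < t := by positivity
    have htmem : a + t • (y - a) ∈ A := by
      apply hball
      simp [Real.ball_eq_Ioo, ht]
      constructor <;> [linarith; linarith [abs_nonneg ε, le_abs_self ε]]
    set p := a + t • (y - a) with hp
    have hpcl : p ∈ closure (Y : Set X) := by
      have h1 : p ∈ Y.topologicalClosure := by
        exact Submodule.add_mem _ (hYcl a (subset_closure haY))
          (Submodule.smul_mem _ _ (Submodule.sub_mem _ (hYcl y hy) (hYcl a (subset_closure haY))))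
      rwa [← Submodule.topologicalClosure_coe]
    have hpmem : p ∈ A ∩ (Y : Set X) := by
      rw [h]
      exact ⟨hAopen.inter_closure ⟨htmem, hpcl⟩, htmem⟩
    have hpY : p ∈ Y := hpmem.2
    have hyeq : y = t⁻¹ • (p - a) + a := by
      rw [hp]
      rw [add_sub_cancel_left, smul_smul, inv_mul_cancel₀ htpos.ne', one_smul]
      abel
    rw [hyeq]
    exact Y.add_mem (Y.smul_mem _ (Y.sub_mem hpY haY)) haY
  · intro hY
    apply Set.Subset.antisymm
    · exact fun x hx => ⟨subset_closure hx, hx.1⟩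
    · intro x hx
      have : x ∈ closure (Y : Set X) :=
        closure_mono Set.inter_subset_right hx.1
      exact ⟨hx.2, hY.closure_eq ▸ this⟩
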